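/- The product X = ∏_{n∈ℕ} X_n of countably many spaces of almost countable type is of almost countable type. -/

import Mathlib

open Set Topology Pointwise

/-- A compact subset `K` of `X` is of countable character in `X` if there is a
countable family of open sets, each containing `K`, such that every open set
containing `K` contains one of them. -/
def CountableChar {X : Type*} [TopologicalSpace X] (K : Set X) : Prop :=
  ∃ U : ℕ → Set X, (∀ n, IsOpen (U n) ∧ K ⊆ U n) ∧
    ∀ V : Set X, IsOpen V → K ⊆ V → ∃ n, U n ⊆ V

/-- A space is of almost countable type if it contains a non-empty compact set
of countable character in the space. -/
def AlmostCountableType (X : Type*) [TopologicalSpace X] : Prop :=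
  ∃ K : Set X, K.Nonempty ∧ IsCompact K ∧ CountableChar K

/-- A space is of almost subcountable type if it contains a non-empty compact
set that is a Gδ-set in the space. -/
def AlmostSubcountableType (X : Type*) [TopologicalSpace X] : Prop :=
  ∃ K : Set X, K.Nonempty ∧ IsCompact K ∧ IsGδ K

/-- A space is of countable type if every compact subset is contained in a
compact subset of countable character in the space. -/
def CountableType (X : Type*) [TopologicalSpace X] : Prop :=
  ∀ F : Set X, IsCompact F → ∃ K : Set X, F ⊆ K ∧ IsCompact K ∧ CountableChar K

/-- A map is perfect if it is continuous, closed, and has compact fibers. -/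
def PerfectMap {X Y : Type*} [TopologicalSpace X] [TopologicalSpace Y] (f : X → Y) : Prop :=
  Continuous f ∧ IsClosedMap f ∧ ∀ y : Y, IsCompact (f ⁻¹' {y})



/-- Core induction for Wallace's theorem: if `S` depends only on coordinates `< k` and
contains a neighborhood of the compact box `univ.pi K`, then `S` contains a finite open box. -/
lemma wallace_aux {X : ℕ → Type*} [∀ n, TopologicalSpace (X n)]
    (K : ∀ n, Set (X n)) (hKc : ∀ n, IsCompact (K n)) (hKne : ∀ n, (K n).Nonempty) :
    ∀ (k : ℕ) (S : Set (∀ n, X n)),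
      (∀ x y : ∀ n, X n, (∀ n, n < k → x n = y n) → x ∈ S → y ∈ S) →
      Set.pi Set.univ K ⊆ interior S →
      ∃ W : ∀ n, Set (X n), (∀ n, IsOpen (W n) ∧ K n ⊆ W n) ∧
        {x : ∀ n, X n | ∀ n, n < k → x n ∈ W n} ⊆ S := by
  intro k
  induction k with
  | zero =>
    intro S hcyl hsub
    refine ⟨fun _ => Set.univ, fun n => ⟨isOpen_univ, subset_univ _⟩, ?_⟩
    intro x _
    have hx0 : (fun n => (hKne n).some) ∈ Set.pi Set.univ K := fun n _ => (hKne n).some_mem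
    exact hcyl _ x (fun n hn => absurd hn (Nat.not_lt_zero n)) (interior_subset (hsub hx0))
  | succ k ih =>
    intro S hcyl hsub
    classical
    have hcont : Continuous fun p : X k × (∀ n, X n) => Function.update p.2 k p.1 :=
      Continuous.update continuous_snd k continuous_fst
    have hNopen : IsOpen ((fun p : X k × (∀ n, X n) => Function.update p.2 k p.1) ⁻¹'
        interior S) := isOpen_interior.preimage hcont
    have hsub' : K k ×ˢ Set.pi Set.univ K ⊆
        (fun p : X k × (∀ n, X n) => Function.update p.2 k p.1) ⁻¹' interior S := by
      rintro ⟨a, x⟩ ⟨ha, hx⟩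
      refine hsub ?_
      intro n _
      rcases eq_or_ne n k with rfl | hne
      · simpa using ha
      · simpa [Function.update_of_ne hne] using hx n (mem_univ n)
    obtain ⟨u, v, huo, hvo, hKu, hKv, huv⟩ :=
      generalized_tube_lemma (hKc k) (isCompact_univ_pi hKc) hNopen hsub'
    set T : Set (∀ n, X n) := {x | ∀ a ∈ u, Function.update x k a ∈ S} with hT
    have hvT : v ⊆ T := by
      intro x hx a ha
      exact interior_subset (huv (show (a, x) ∈ u ×ˢ v from ⟨ha, hx⟩))
    have hcylT : ∀ x y : ∀ n, X n, (∀ n, n < k → x n = y n) → x ∈ T → y ∈ T := by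
      intro x y hxy hx a ha
      refine hcyl (Function.update x k a) (Function.update y k a) ?_ (hx a ha)
      intro n hn
      rcases eq_or_ne n k with rfl | hne
      · simp
      · rw [Function.update_of_ne hne, Function.update_of_ne hne]
        exact hxy n (lt_of_le_of_ne (Nat.lt_succ_iff.mp hn) hne)
    have hsubT : Set.pi Set.univ K ⊆ interior T :=
      fun x hx => interior_maximal hvT hvo (hKv hx)
    obtain ⟨W₀, hW₀, hboxT⟩ := ih T hcylT hsubT
    refine ⟨Function.update W₀ k u, ?_, ?_⟩
    · intro n
      rcases eq_or_ne n k with rfl | hne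
      · simpa using ⟨huo, hKu⟩
      · simpa [Function.update_of_ne hne] using hW₀ n
    · intro x hx
      have hxT : x ∈ T := by
        refine hboxT ?_
        intro n hn
        have := hx n (Nat.lt_succ_of_lt hn)
        rwa [Function.update_of_ne hn.ne] at this
      have hxk : x k ∈ u := by
        have := hx k (Nat.lt_succ_self k)
        simpa using this
      have := hxT (x k) hxk
      rwa [Function.update_eq_self] at this

/-- Wallace's theorem for countable products: an open set containing a compact box
contains a finite open box around it. -/
lemma wallace {X : ℕ → Type*} [∀ n, TopologicalSpace (X n)]
    (K : ∀ n, Set (X n)) (hKc : ∀ n, IsCompact (K n)) (hKne : ∀ n, (K n).Nonempty)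
    {V : Set (∀ n, X n)} (hV : IsOpen V) (hKV : Set.pi Set.univ K ⊆ V) :
    ∃ (W : ∀ n, Set (X n)) (k : ℕ), (∀ n, IsOpen (W n) ∧ K n ⊆ W n) ∧
      {x : ∀ n, X n | ∀ n, n < k → x n ∈ W n} ⊆ V := by
  classical
  have hbasic : ∀ x ∈ Set.pi Set.univ K, ∃ (I : Finset ℕ) (w : ∀ n, Set (X n)),
      (∀ i ∈ I, IsOpen (w i) ∧ x i ∈ w i) ∧ (↑I : Set ℕ).pi w ⊆ V :=
    fun x hx => isOpen_pi_iff.mp hV x (hKV hx)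
  choose! Ix wx hwx hsubx using hbasic
  have hcov : Set.pi Set.univ K ⊆ ⋃ x ∈ Set.pi Set.univ K, (↑(Ix x) : Set ℕ).pi (wx x) := by
    intro x hx
    exact mem_biUnion hx (fun i hi => ((hwx x hx) i hi).2)
  obtain ⟨t, hts, htfin, htcov⟩ := (isCompact_univ_pi hKc).elim_finite_subcover_image
    (fun x hx => isOpen_set_pi (Ix x).finite_toSet (fun i hi => ((hwx x hx) i hi).1))
    hcov
  set k : ℕ := htfin.toFinset.sup (fun x => (Ix x).sup id) + 1 with hk
  have hIk : ∀ x ∈ t, ∀ i ∈ Ix x, i < k := by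
    intro x hx i hi
    have h1 : id i ≤ (Ix x).sup id := Finset.le_sup hi
    have h2 : (Ix x).sup id ≤ htfin.toFinset.sup (fun x => (Ix x).sup id) :=
      Finset.le_sup (f := fun x => (Ix x).sup id) (htfin.mem_toFinset.mpr hx)
    exact Nat.lt_succ_of_le (le_trans h1 h2)
  set Uu : Set (∀ n, X n) := ⋃ x ∈ t, (↑(Ix x) : Set ℕ).pi (wx x) with hUu
  have hUuo : IsOpen Uu :=
    isOpen_biUnion fun x hx => isOpen_set_pi (Ix x).finite_toSet
      (fun i hi => ((hwx x (hts hx)) i hi).1)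
  have hUuV : Uu ⊆ V := by
    intro y hy
    obtain ⟨x, hx, hy⟩ := mem_iUnion₂.mp hy
    exact hsubx x (hts hx) hy
  have hcylU : ∀ y z : ∀ n, X n, (∀ n, n < k → y n = z n) → y ∈ Uu → z ∈ Uu := by
    intro y z hyz hy
    obtain ⟨x, hx, hy⟩ := mem_iUnion₂.mp hy
    refine mem_iUnion₂.mpr ⟨x, hx, ?_⟩
    intro i hi
    rw [Finset.mem_coe] at hi
    rw [← hyz i (hIk x hx i hi)]
    exact hy i (Finset.mem_coe.mpr hi)
  have hsubU : Set.pi Set.univ K ⊆ interior Uu := by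
    rw [hUuo.interior_eq]; exact htcov
  obtain ⟨W, hW, hbox⟩ := wallace_aux K hKc hKne k Uu hcylU hsubU
  exact ⟨W, k, hW, fun x hx => hUuV (hbox hx)⟩

/-- The product of countably many spaces of almost countable type is of
almost countable type. -/
theorem almostCountableType_pi (X : ℕ → Type*) [∀ n, TopologicalSpace (X n)]
    (h : ∀ n, AlmostCountableType (X n)) :
    AlmostCountableType (∀ n, X n) := by
  classical
  choose K hKne hKc hchar using h
  choose U hU hUch using hchar
  set G : List ℕ → Set (∀ n, X n) :=
    fun l => {x | ∀ n, n < l.length → x n ∈ U n (l.getD n 0)} with hG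
  have hGopen : ∀ l, IsOpen (G l) := by
    intro l
    have : G l = ⋂ n ∈ Finset.range l.length, (fun x : ∀ n, X n => x n) ⁻¹'
        (U n (l.getD n 0)) := by
      ext x
      simp [hG, Finset.mem_range]
    rw [this]
    exact isOpen_biInter_finset fun n _ =>
      (hU n (l.getD n 0)).1.preimage (continuous_apply n)
  have hGsup : ∀ l, Set.pi Set.univ K ⊆ G l := by
    intro l x hx n _
    exact (hU n (l.getD n 0)).2 (hx n (mem_univ n))
  refine ⟨Set.pi Set.univ K, ⟨fun n => (hKne n).some, fun n _ => (hKne n).some_mem⟩,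
    isCompact_univ_pi hKc, fun m => G (Denumerable.ofNat (List ℕ) m), ?_, ?_⟩
  · exact fun m => ⟨hGopen _, hGsup _⟩
  · intro V hV hKV
    obtain ⟨W, k, hW, hbox⟩ := wallace K hKc hKne hV hKV
    choose m hm using fun n => hUch n (W n) (hW n).1 (hW n).2
    refine ⟨Encodable.encode (List.ofFn fun i : Fin k => m i), ?_⟩
    simp only [Denumerable.ofNat_encode]
    intro x hx
    refine hbox ?_
    intro n hn
    have hlen : (List.ofFn fun i : Fin k => m i).length = k := List.length_ofFn
    have hget : (List.ofFn fun i : Fin k => m i).getD n 0 = m n := by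
      rw [List.getD_eq_getElem _ _ (by rw [hlen]; exact hn)]
      simp
    have := hx n (by rw [hlen]; exact hn)
    rw [hget] at this
    exact hm n this
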